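/- Every signed permutation x on a finite set I is congruent, modulo the subspace M_I, to a ℚ-linear combination of B-snakes on I; i.e., the composite ℚ⟨𝔄^B_I⟩ → ℚ⟨𝔖^B_I⟩/M_I is surjective. -/

import Mathlib

open scoped BigOperators

/-- `ent l i` is the entry `x_i` of the word `l = [x_r, …, x_1]` (1-indexed from the right),
and `0` out of range. -/
def ent (l : List ℤ) (i : ℕ) : ℤ :=
  if 1 ≤ i ∧ i ≤ l.length then l.getD (l.length - i) 0 else 0

/-- Build the word `[g r, g (r-1), …, g 1]`. -/
def build (r : ℕ) (g : ℕ → ℤ) : List ℤ :=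
  (List.range r).map (fun j => g (r - j))

/-- A signed permutation on `I`, written as the word `x_r ⋯ x_1`. -/
def IsSignedPerm (I : Finset ℕ) (l : List ℤ) : Prop :=
  l.length = I.card ∧ (∀ z ∈ l, z.natAbs ∈ I) ∧ (l.map Int.natAbs).Nodup

/-- A `B`-snake on `I`: a signed permutation with `0 < x_r > x_{r-1} < x_{r-2} > ⋯ x_1`. -/
def IsBSnake (I : Finset ℕ) (l : List ℤ) : Prop :=
  IsSignedPerm I l ∧ (0 < l.length → 0 < ent l l.length) ∧
  ∀ k, 1 ≤ k → k + 1 ≤ l.length →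
    if (l.length - k) % 2 = 1 then ent l k < ent l (k + 1)
    else ent l (k + 1) < ent l k

/-- Restrictability of a word on `I1 ∪ I2` to the pair `(I1, I2)`. -/
def Restrictable (I1 I2 : Finset ℕ) (l : List ℤ) : Prop :=
  ∀ i, 1 ≤ i → i ≤ (l.length - 1) / 2 →
    ({(ent l (2*i-1)).natAbs, (ent l (2*i)).natAbs} : Finset ℕ) ⊆ I1 ∨
    ({(ent l (2*i-1)).natAbs, (ent l (2*i)).natAbs} : Finset ℕ) ⊆ I2

/-- `κ_{(I1,I2)}(z)`: the number of pairs `(z_{2i-1}, z_{2j-1})` with `|z_{2i-1}| ∈ I1`,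
`|z_{2j-1}| ∈ I2` and `⌊(ℓ+1)/2⌋ ≥ i > j ≥ 1`. -/
def kappa (I1 I2 : Finset ℕ) (l : List ℤ) : ℕ :=
  (((Finset.Icc 1 ((l.length + 1) / 2)) ×ˢ (Finset.Icc 1 ((l.length + 1) / 2))).filter
    (fun p => p.2 < p.1 ∧ (ent l (2*p.1-1)).natAbs ∈ I1 ∧ (ent l (2*p.2-1)).natAbs ∈ I2)).card

/-- The subpermutation `ρ_J`. -/
def rho (J : Finset ℕ) (l : List ℤ) : List ℤ :=
  l.filter (fun a => decide (a.natAbs ∈ J))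

/-- `P_J` relative to the ambient index set `I`. -/
def Psub (I J : Finset ℕ) (l : List ℤ) : List ℤ :=
  if (I.card + J.card) % 2 = 0 then rho J l else rho J (l.map (fun a => -a))

/-- The free `ℚ`-vector space on all words. -/
abbrev FreeV : Type := (List ℤ) →₀ ℚ

/-- The basis vector of a word. -/
noncomputable def sv (l : List ℤ) : FreeV := Finsupp.single l 1

def swapPair (x : List ℤ) (i : ℕ) : List ℤ :=
  build x.length (fun k =>
    if k = 2*i - 1 then ent x (2*i) else if k = 2*i then ent x (2*i-1) else ent x k)

/-- relation `ℋ₁`. -/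
noncomputable def H1 (x : List ℤ) (i : ℕ) : FreeV := sv x + sv (swapPair x i)

def arr4 (x : List ℤ) (i : ℕ) (p q s t : ℤ) : List ℤ :=
  build x.length (fun k =>
    if k = 2*i+2 then p else if k = 2*i+1 then q else if k = 2*i then s
    else if k = 2*i-1 then t else ent x k)

/-- relation `ℋ₂`. -/
noncomputable def H2 (x : List ℤ) (i : ℕ) : FreeV :=
  sv (arr4 x i (ent x (2*i+2)) (ent x (2*i+1)) (ent x (2*i)) (ent x (2*i-1)))
  - sv (arr4 x i (ent x (2*i+2)) (ent x (2*i)) (ent x (2*i+1)) (ent x (2*i-1)))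
  + sv (arr4 x i (ent x (2*i+1)) (ent x (2*i)) (ent x (2*i+2)) (ent x (2*i-1)))
  + sv (arr4 x i (ent x (2*i+2)) (ent x (2*i-1)) (ent x (2*i+1)) (ent x (2*i)))
  - sv (arr4 x i (ent x (2*i+1)) (ent x (2*i-1)) (ent x (2*i+2)) (ent x (2*i)))
  + sv (arr4 x i (ent x (2*i)) (ent x (2*i-1)) (ent x (2*i+2)) (ent x (2*i+1)))

/-- relation `ℋ₃` (for `|I|` odd). -/
noncomputable def H3 (x : List ℤ) : FreeV :=
  sv x + sv (build x.length (fun k => if k = x.length then -ent x k else ent x k))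

def top2 (x : List ℤ) (p q : ℤ) : List ℤ :=
  build x.length (fun k =>
    if k = x.length then p else if k = x.length - 1 then q else ent x k)

/-- relation `ℋ₄` (for `|I|` even). -/
noncomputable def H4 (x : List ℤ) : FreeV :=
  sv (top2 x (ent x x.length) (ent x (x.length - 1)))
  - sv (top2 x (ent x x.length) (-ent x (x.length - 1)))
  + sv (top2 x (ent x (x.length - 1)) (-ent x x.length))
  - sv (top2 x (-ent x (x.length - 1)) (-ent x x.length))

def top3 (x : List ℤ) (p q s : ℤ) : List ℤ :=
  build x.length (fun k =>
    if k = x.length then p else if k = x.length - 1 then q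
    else if k = x.length - 2 then s else ent x k)

/-- relation `ℋ₅` (for `|I|` odd, `|I| ≥ 3`). -/
noncomputable def H5 (x : List ℤ) : FreeV :=
  sv (top3 x (ent x x.length) (ent x (x.length-1)) (ent x (x.length-2)))
  - sv (top3 x (ent x x.length) (-ent x (x.length-1)) (ent x (x.length-2)))
  + sv (top3 x (ent x x.length) (-ent x (x.length-2)) (ent x (x.length-1)))
  - sv (top3 x (ent x x.length) (-ent x (x.length-2)) (-ent x (x.length-1)))
  - sv (top3 x (ent x (x.length-1)) (ent x x.length) (ent x (x.length-2)))
  + sv (top3 x (ent x (x.length-1)) (-ent x x.length) (ent x (x.length-2)))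
  - sv (top3 x (ent x (x.length-1)) (-ent x (x.length-2)) (ent x x.length))
  + sv (top3 x (ent x (x.length-1)) (-ent x (x.length-2)) (-ent x x.length))
  + sv (top3 x (ent x (x.length-2)) (ent x x.length) (ent x (x.length-1)))
  - sv (top3 x (ent x (x.length-2)) (-ent x x.length) (ent x (x.length-1)))
  + sv (top3 x (ent x (x.length-2)) (-ent x (x.length-1)) (ent x x.length))
  - sv (top3 x (ent x (x.length-2)) (-ent x (x.length-1)) (-ent x x.length))

/-- The relation subspace `M_I` spanned by `ℋ₁, …, ℋ₅`. -/
noncomputable def Mrel (I : Finset ℕ) : Submodule ℚ FreeV :=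
  Submodule.span ℚ
    ({v | ∃ x i, IsSignedPerm I x ∧ 1 ≤ i ∧ i ≤ I.card / 2 ∧ v = H1 x i} ∪
     {v | ∃ x i, IsSignedPerm I x ∧ 1 ≤ i ∧ i + 1 ≤ I.card / 2 ∧ v = H2 x i} ∪
     {v | ∃ x, IsSignedPerm I x ∧ I.card % 2 = 1 ∧ v = H3 x} ∪
     {v | ∃ x, IsSignedPerm I x ∧ I.card % 2 = 0 ∧ v = H4 x} ∪
     {v | ∃ x, IsSignedPerm I x ∧ I.card % 2 = 1 ∧ 3 ≤ I.card ∧ v = H5 x})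

/-- `ℚ⟨𝔖^B_I⟩`, the span of the signed permutations on `I`. -/
noncomputable def SP (I : Finset ℕ) : Submodule ℚ FreeV :=
  Submodule.span ℚ {v | ∃ x, IsSignedPerm I x ∧ v = sv x}

-- The expansion of (the class of) `x` in the basis of `B`-snakes modulo `M_I`;
-- `snakeCoeff I x α` is the coefficient `C^α_x`.
open scoped Classical in
noncomputable def snakeCoeff (I : Finset ℕ) (x : List ℤ) : FreeV :=
  if h : ∃! c : FreeV, ((c.support : Set (List ℤ)) ⊆ {y | IsBSnake I y}) ∧
      (sv x - c.sum fun y q => q • sv y) ∈ Mrel I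
  then h.choose else 0

/-- The cup product `α ⌣ β` for snakes `α` on `I1` and `β` on `I2`. -/
noncomputable def cup (I1 I2 : Finset ℕ) (α β : List ℤ) : FreeV :=
  if Disjoint I1 I2 ∧ (I1.card * I2.card) % 2 = 0 then
    ∑ᶠ z ∈ {z : List ℤ | IsBSnake (I1 ∪ I2) z ∧ Restrictable I1 I2 z},
      (((-1 : ℚ) ^ kappa I1 I2 z) * snakeCoeff I1 (Psub (I1 ∪ I2) I1 z) α
        * snakeCoeff I2 (Psub (I1 ∪ I2) I2 z) β) • sv z
  else 0

/-- The relation `≺` on words of the same length. -/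
def precRel (x y : List ℤ) : Prop :=
  ∃ i, 1 ≤ i ∧ i ≤ x.length / 2 ∧
    ent x (2*i-1) + ent x (2*i+1) < ent y (2*i-1) + ent y (2*i+1) ∧
    ∀ j, 1 ≤ j → j < i →
      ent x (2*j-1) + ent x (2*j+1) = ent y (2*j-1) + ent y (2*j+1)

/-- The relation `◁`. -/
def triRel (x y : List ℤ) : Prop :=
  if x.length % 2 = 1 then precRel x y
  else precRel (x.map (fun a => -a)) (y.map (fun a => -a))

/-- The relation `⊴`. -/
def tle (x y : List ℤ) : Prop := triRel x y ∨ x = y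

/-- `F_i(x)`. -/
def Fset (x : List ℤ) (i : ℕ) : Finset ℤ :=
  if x.length % 2 = 1 then (Finset.Icc 1 (2*i-1)).image (ent x)
  else (Finset.Icc 1 (2*i-1)).image (fun k => -ent x k)

/-- `x*`: swap the entries in each block of two, and negate the leading entry if the
length is odd. -/
def star (x : List ℤ) : List ℤ :=
  build x.length (fun k =>
    if x.length % 2 = 1 ∧ k = x.length then -ent x k
    else if k % 2 = 1 then ent x (k+1) else ent x (k-1))



namespace Stmt10Aux

lemma length_build (r : ℕ) (g : ℕ → ℤ) : (build r g).length = r := by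
  simp [build]

lemma ent_out (l : List ℤ) (k : ℕ) (h : k = 0 ∨ l.length < k) : ent l k = 0 := by
  unfold ent
  rw [if_neg]; omega

lemma ent_build (r : ℕ) (g : ℕ → ℤ) (k : ℕ) (h1 : 1 ≤ k) (h2 : k ≤ r) :
    ent (build r g) k = g k := by
  unfold ent
  rw [if_pos (by rw [length_build]; exact ⟨h1, h2⟩)]
  rw [length_build]
  rw [List.getD_eq_getElem _ _ (by simp [build]; omega)]
  simp only [build, List.getElem_map, List.getElem_range]
  congr 1
  omega

lemma build_congr (r : ℕ) (f g : ℕ → ℤ) (h : ∀ k, 1 ≤ k → k ≤ r → f k = g k) :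
    build r f = build r g := by
  unfold build
  apply List.map_congr_left
  intro j hj
  rw [List.mem_range] at hj
  exact h _ (by omega) (by omega)

lemma build_ent (x : List ℤ) : build x.length (ent x) = x := by
  apply List.ext_getElem (by simp [length_build])
  intro n h1 h2
  simp only [build, List.getElem_map, List.getElem_range]
  unfold ent
  rw [if_pos (by simp [build] at h1; omega)]
  rw [List.getD_eq_getElem _ _ (by simp [build] at h1 ⊢; omega)]
  congr 1
  simp [build] at h1
  omega

lemma ent_mem (l : List ℤ) (k : ℕ) (h1 : 1 ≤ k) (h2 : k ≤ l.length) : ent l k ∈ l := by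
  unfold ent
  rw [if_pos ⟨h1, h2⟩]
  rw [List.getD_eq_getElem _ _ (by omega)]
  exact List.getElem_mem _

def SPfun (I : Finset ℕ) (r : ℕ) (g : ℕ → ℤ) : Prop :=
  r = I.card ∧ (∀ k, 1 ≤ k → k ≤ r → (g k).natAbs ∈ I) ∧
    ∀ j k, 1 ≤ j → j ≤ r → 1 ≤ k → k ≤ r → (g j).natAbs = (g k).natAbs → j = k

lemma spfun_of (I : Finset ℕ) (l : List ℤ) (h : IsSignedPerm I l) :
    SPfun I l.length (ent l) := by
  obtain ⟨hlen, hmem, hnd⟩ := h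
  refine ⟨hlen.symm ▸ rfl, fun k h1 h2 => hmem _ (ent_mem l k h1 h2), ?_⟩
  intro j k hj1 hj2 hk1 hk2 heq
  have hj : l.length - j < l.length := by omega
  have hk : l.length - k < l.length := by omega
  have ej : ent l j = l[l.length - j] := by
    unfold ent; rw [if_pos ⟨hj1, hj2⟩, List.getD_eq_getElem _ _ hj]
  have ek : ent l k = l[l.length - k] := by
    unfold ent; rw [if_pos ⟨hk1, hk2⟩, List.getD_eq_getElem _ _ hk]
  rw [ej, ek] at heq
  have h2 : (l.map Int.natAbs)[l.length - j]'(by simp; omega) =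
      (l.map Int.natAbs)[l.length - k]'(by simp; omega) := by
    simp only [List.getElem_map]; exact heq
  have := hnd.getElem_inj_iff.mp h2
  omega

lemma isSignedPerm_build (I : Finset ℕ) (r : ℕ) (g : ℕ → ℤ) (h : SPfun I r g) :
    IsSignedPerm I (build r g) := by
  obtain ⟨hr, hmem, hinj⟩ := h
  refine ⟨by rw [length_build, hr], ?_, ?_⟩
  · intro z hz
    simp only [build, List.mem_map, List.mem_range] at hz
    obtain ⟨j, hj, rfl⟩ := hz
    exact hmem _ (by omega) (by omega)
  · unfold build
    rw [List.map_map]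
    apply List.Nodup.map_on _ (List.nodup_range (n := r))
    intro a ha b hb hab
    rw [List.mem_range] at ha hb
    simp only [Function.comp] at hab
    have := hinj (r - a) (r - b) (by omega) (by omega) (by omega) (by omega) hab
    omega

lemma spfun_comp (I : Finset ℕ) (r : ℕ) (g g' : ℕ → ℤ) (σ : ℕ → ℕ)
    (h : SPfun I r g)
    (hσ : ∀ k, 1 ≤ k → k ≤ r → (1 ≤ σ k ∧ σ k ≤ r ∧ (g' k).natAbs = (g (σ k)).natAbs))
    (hinj : ∀ j k, 1 ≤ j → j ≤ r → 1 ≤ k → k ≤ r → σ j = σ k → j = k) :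
    SPfun I r g' := by
  obtain ⟨hr, hmem, hi⟩ := h
  refine ⟨hr, ?_, ?_⟩
  · intro k h1 h2
    obtain ⟨a, b, c⟩ := hσ k h1 h2
    rw [c]; exact hmem _ a b
  · intro j k hj1 hj2 hk1 hk2 heq
    obtain ⟨aj, bj, cj⟩ := hσ j hj1 hj2
    obtain ⟨ak, bk, ck⟩ := hσ k hk1 hk2
    rw [cj, ck] at heq
    exact hinj j k hj1 hj2 hk1 hk2 (hi _ _ aj bj ak bk heq)


open Finset in
/-- weight of block `i` in the main measure -/
def wgt (r i : ℕ) : ℤ := if r % 2 = 1 then ((r/2 : ℕ) : ℤ) - i else (i : ℤ) - ((r/2 : ℕ) : ℤ)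

/-- block `i` sum -/
def bs (l : List ℤ) (i : ℕ) : ℤ := ent l (2*i) + ent l (2*i-1)

open Finset in
noncomputable def muV (l : List ℤ) : ℤ :=
  ∑ i ∈ Finset.Icc 1 (l.length / 2), wgt l.length i * bs l i

noncomputable def Tm (l : List ℤ) : ℕ :=
  if l.length % 2 = 1 then
    (if ent l (l.length-2) < ent l (l.length-1) then 2 else 0)
    + (if ent l l.length < 0 then 2 else 0)
    + (if 0 < ent l l.length ∧ ent l (l.length-1) < ent l (l.length-2)
          ∧ ent l l.length < ent l (l.length-1) then 1 else 0)
  else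
    (if ent l l.length < ent l (l.length-1) then 2 else 0)
    + (if ent l (l.length-1) < ent l l.length ∧ ent l l.length < 0 then 1 else 0)

def Dpred (l : List ℤ) (i : ℕ) : Prop :=
  if l.length % 2 = 1 then ent l (2*i-1) < ent l (2*i) else ent l (2*i) < ent l (2*i-1)

open scoped Classical in
noncomputable def Dm (l : List ℤ) : ℕ :=
  ((Finset.Icc 1 (l.length / 2 - 1)).filter (fun i => Dpred l i)).card

noncomputable def mu (I : Finset ℕ) (l : List ℤ) : ℕ :=
  (muV l + 2*((I.sup id : ℕ) : ℤ)*l.length*l.length + 1).toNat * (7*(l.length+10))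
    + Tm l * (l.length+10) + Dm l

lemma Tm_le (l : List ℤ) : Tm l ≤ 5 := by
  unfold Tm; split_ifs <;> omega

lemma Dm_le (l : List ℤ) : Dm l ≤ l.length := by
  classical
  calc Dm l ≤ (Finset.Icc 1 (l.length / 2 - 1)).card := Finset.card_filter_le _ _
  _ ≤ l.length := by rw [Nat.card_Icc]; omega

lemma ent_abs_le (I : Finset ℕ) (l : List ℤ) (h : IsSignedPerm I l) (k : ℕ) :
    |ent l k| ≤ ((I.sup id : ℕ) : ℤ) := by
  by_cases hk : 1 ≤ k ∧ k ≤ l.length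
  · have hm := h.2.1 _ (ent_mem l k hk.1 hk.2)
    have : (ent l k).natAbs ≤ I.sup id := Finset.le_sup (f := id) hm
    rw [Int.abs_eq_natAbs]
    exact_mod_cast this
  · rw [ent_out l k (by omega)]
    simp

lemma muV_bound (I : Finset ℕ) (l : List ℤ) (h : IsSignedPerm I l) :
    |muV l| ≤ 2*((I.sup id : ℕ) : ℤ)*l.length*l.length := by
  set M : ℤ := ((I.sup id : ℕ) : ℤ) with hM
  have hM0 : 0 ≤ M := by positivity
  calc |muV l| ≤ ∑ i ∈ Finset.Icc 1 (l.length / 2), |wgt l.length i * bs l i| :=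
        Finset.abs_sum_le_sum_abs _ _
    _ ≤ ∑ i ∈ Finset.Icc 1 (l.length / 2), (l.length : ℤ) * (2*M) := by
        apply Finset.sum_le_sum
        intro i hi
        rw [Finset.mem_Icc] at hi
        rw [abs_mul]
        have h1 : |wgt l.length i| ≤ (l.length : ℤ) := by
          unfold wgt; split_ifs <;> rw [abs_le] <;> constructor <;> push_cast <;> omega
        have h2 : |bs l i| ≤ 2*M := by
          unfold bs
          calc |ent l (2*i) + ent l (2*i-1)| ≤ |ent l (2*i)| + |ent l (2*i-1)| := abs_add_le _ _
            _ ≤ 2*M := by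
              have := ent_abs_le I l h (2*i)
              have := ent_abs_le I l h (2*i-1)
              omega
        calc |wgt l.length i| * |bs l i| ≤ (l.length : ℤ) * |bs l i| := by
              apply mul_le_mul_of_nonneg_right h1 (abs_nonneg _)
          _ ≤ (l.length : ℤ) * (2*M) := by
              apply mul_le_mul_of_nonneg_left h2 (by positivity)
    _ ≤ 2*M*l.length*l.length := by
        rw [Finset.sum_const, Nat.card_Icc, nsmul_eq_mul]
        have hc : ((l.length / 2 + 1 - 1 : ℕ) : ℤ) ≤ (l.length : ℤ) := by
          push_cast; omega
        calc ((l.length / 2 + 1 - 1 : ℕ) : ℤ) * ((l.length : ℤ) * (2*M))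
            ≤ (l.length : ℤ) * ((l.length : ℤ) * (2*M)) :=
              mul_le_mul_of_nonneg_right hc (by positivity)
          _ = 2*M*l.length*l.length := by ring

lemma mu_lt_of_muV_lt (I : Finset ℕ) (y x : List ℤ) (hy : IsSignedPerm I y)
    (hx : IsSignedPerm I x) (hlen : y.length = x.length) (hV : muV y < muV x) :
    mu I y < mu I x := by
  have by_ := muV_bound I y hy
  have bx := muV_bound I x hx
  rw [hlen] at by_
  rw [abs_le] at by_ bx
  set M : ℤ := ((I.sup id : ℕ) : ℤ) with hM
  set B : ℤ := 2*M*x.length*x.length with hB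
  have hVy : (muV y + B + 1).toNat < (muV x + B + 1).toNat := by
    omega
  unfold mu
  rw [hlen, ← hM, ← hB]
  set Vy := (muV y + B + 1).toNat with hVydef
  set Vx := (muV x + B + 1).toNat with hVxdef
  set r := x.length with hr
  have hTy := Tm_le y
  have hDy : Dm y ≤ r := by rw [← hlen]; exact Dm_le y
  have h1 : Tm y * (r+10) ≤ 5*(r+10) := Nat.mul_le_mul_right _ hTy
  have h2 : (Vy + 1) * (7*(r+10)) ≤ Vx * (7*(r+10)) := Nat.mul_le_mul_right _ hVy
  rw [add_mul, one_mul] at h2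
  omega

lemma mu_lt_of_T_lt (I : Finset ℕ) (y x : List ℤ) (hlen : y.length = x.length)
    (hV : muV y = muV x) (hT : Tm y < Tm x) (hD : Dm y ≤ Dm x) :
    mu I y < mu I x := by
  unfold mu
  rw [hlen, hV]
  set r := x.length
  set V := (muV x + 2*((I.sup id : ℕ) : ℤ)*x.length*x.length + 1).toNat
  have hDy := Dm_le y
  rw [hlen] at hDy
  have key : Tm y * (r+10) + (r+10) ≤ Tm x * (r+10) := by
    have h' : (Tm y + 1) * (r + 10) ≤ Tm x * (r+10) := Nat.mul_le_mul_right _ hT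
    rw [add_mul, one_mul] at h'
    exact h'
  omega

lemma mu_lt_of_D_lt (I : Finset ℕ) (y x : List ℤ) (hlen : y.length = x.length)
    (hV : muV y = muV x) (hT : Tm y = Tm x) (hD : Dm y < Dm x) :
    mu I y < mu I x := by
  unfold mu
  rw [hlen, hV, hT]
  omega


lemma wgt_sub (r i : ℕ) : wgt r i - wgt r (i+1) = if r % 2 = 1 then 1 else -1 := by
  unfold wgt; split_ifs <;> push_cast <;> ring

lemma wgt_top (r : ℕ) : wgt r (r/2) = 0 := by
  unfold wgt; split_ifs <;> ring

lemma muV_congr (y z : List ℤ) (hlen : y.length = z.length)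
    (h : ∀ i, 1 ≤ i → i ≤ z.length/2 → wgt z.length i * bs y i = wgt z.length i * bs z i) :
    muV y = muV z := by
  unfold muV
  rw [hlen]
  apply Finset.sum_congr rfl
  intro i hi
  rw [Finset.mem_Icc] at hi
  exact h i hi.1 hi.2

lemma muV_sub (y z : List ℤ) (i0 : ℕ) (hlen : y.length = z.length) (hi : 1 ≤ i0)
    (him : i0 + 1 ≤ z.length/2)
    (hsame : ∀ j, 1 ≤ j → j ≤ z.length/2 → j ≠ i0 → j ≠ i0+1 → bs y j = bs z j)
    (hsum : bs y (i0+1) - bs z (i0+1) = -(bs y i0 - bs z i0)) :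
    muV y - muV z = (wgt z.length i0 - wgt z.length (i0+1)) * (bs y i0 - bs z i0) := by
  unfold muV
  rw [hlen, ← Finset.sum_sub_distrib]
  have hform : ∀ j ∈ Finset.Icc 1 (z.length/2),
      wgt z.length j * bs y j - wgt z.length j * bs z j
      = wgt z.length j * (bs y j - bs z j) := by
    intro j _; ring
  rw [Finset.sum_congr rfl hform]
  have hzero : ∀ j ∈ Finset.Icc 1 (z.length/2), j ∉ ({i0, i0+1} : Finset ℕ) →
      wgt z.length j * (bs y j - bs z j) = 0 := by
    intro j hj hj2
    rw [Finset.mem_Icc] at hj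
    simp only [Finset.mem_insert, Finset.mem_singleton] at hj2
    push_neg at hj2
    rw [hsame j hj.1 hj.2 hj2.1 hj2.2]
    ring
  have hsub : ({i0, i0+1} : Finset ℕ) ⊆ Finset.Icc 1 (z.length/2) := by
    intro j hj
    simp only [Finset.mem_insert, Finset.mem_singleton] at hj
    rw [Finset.mem_Icc]
    omega
  rw [← Finset.sum_subset hsub hzero]
  rw [Finset.sum_pair (by omega : i0 ≠ i0 + 1)]
  rw [hsum]
  ring

lemma Dm_congr (y z : List ℤ) (hlen : y.length = z.length)
    (h : ∀ k, 1 ≤ k → k ≤ 2*(z.length/2 - 1) → ent y k = ent z k) :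
    Dm y = Dm z := by
  classical
  unfold Dm
  rw [hlen]
  congr 1
  apply Finset.filter_congr
  intro i hi
  rw [Finset.mem_Icc] at hi
  unfold Dpred
  rw [hlen, h (2*i) (by omega) (by omega), h (2*i-1) (by omega) (by omega)]

lemma Dm_lt (y z : List ℤ) (i0 : ℕ) (hlen : y.length = z.length)
    (hi0 : 1 ≤ i0) (hi0m : i0 ≤ z.length/2 - 1)
    (h : ∀ k, 1 ≤ k → k ≤ 2*(z.length/2 - 1) → k ≠ 2*i0 → k ≠ 2*i0 - 1 → ent y k = ent z k)
    (hdz : Dpred z i0) (hdy : ¬ Dpred y i0) :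
    Dm y < Dm z := by
  classical
  unfold Dm
  rw [hlen]
  apply Finset.card_lt_card
  constructor
  · intro j hj
    rw [Finset.mem_filter, Finset.mem_Icc] at hj ⊢
    refine ⟨hj.1, ?_⟩
    rcases eq_or_ne j i0 with rfl | hne
    · exact absurd hj.2 hdy
    · have e1 : ent y (2*j) = ent z (2*j) := h _ (by omega) (by omega) (by omega) (by omega)
      have e2 : ent y (2*j-1) = ent z (2*j-1) := h _ (by omega) (by omega) (by omega) (by omega)
      have := hj.2
      unfold Dpred at this ⊢
      rw [hlen, e1, e2] at this
      exact this
  · intro hsub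
    have : i0 ∈ (Finset.Icc 1 (z.length/2 - 1)).filter (fun i => Dpred z i) := by
      rw [Finset.mem_filter, Finset.mem_Icc]; exact ⟨⟨hi0, hi0m⟩, hdz⟩
    have := hsub this
    rw [Finset.mem_filter] at this
    exact hdy this.2

lemma H1_mem (I : Finset ℕ) (x : List ℤ) (i : ℕ) (hx : IsSignedPerm I x)
    (h1 : 1 ≤ i) (h2 : i ≤ I.card/2) : H1 x i ∈ Mrel I := by
  apply Submodule.subset_span
  simp only [Set.mem_union, Set.mem_setOf_eq]
  exact Or.inl (Or.inl (Or.inl (Or.inl ⟨x, i, hx, h1, h2, rfl⟩)))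

lemma H2_mem (I : Finset ℕ) (x : List ℤ) (i : ℕ) (hx : IsSignedPerm I x)
    (h1 : 1 ≤ i) (h2 : i + 1 ≤ I.card/2) : H2 x i ∈ Mrel I := by
  apply Submodule.subset_span
  simp only [Set.mem_union, Set.mem_setOf_eq]
  exact Or.inl (Or.inl (Or.inl (Or.inr ⟨x, i, hx, h1, h2, rfl⟩)))

lemma H3_mem (I : Finset ℕ) (x : List ℤ) (hx : IsSignedPerm I x)
    (h1 : I.card % 2 = 1) : H3 x ∈ Mrel I := by
  apply Submodule.subset_span
  simp only [Set.mem_union, Set.mem_setOf_eq]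
  exact Or.inl (Or.inl (Or.inr ⟨x, hx, h1, rfl⟩))

lemma H4_mem (I : Finset ℕ) (x : List ℤ) (hx : IsSignedPerm I x)
    (h1 : I.card % 2 = 0) : H4 x ∈ Mrel I := by
  apply Submodule.subset_span
  simp only [Set.mem_union, Set.mem_setOf_eq]
  exact Or.inl (Or.inr ⟨x, hx, h1, rfl⟩)

lemma H5_mem (I : Finset ℕ) (x : List ℤ) (hx : IsSignedPerm I x)
    (h1 : I.card % 2 = 1) (h2 : 3 ≤ I.card) : H5 x ∈ Mrel I := by
  apply Submodule.subset_span
  simp only [Set.mem_union, Set.mem_setOf_eq]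
  exact Or.inr ⟨x, hx, h1, h2, rfl⟩

lemma arr4_id (x : List ℤ) (i : ℕ) :
    arr4 x i (ent x (2*i+2)) (ent x (2*i+1)) (ent x (2*i)) (ent x (2*i-1)) = x := by
  conv_rhs => rw [← build_ent x]
  unfold arr4
  apply build_congr
  intro k h1 h2
  split_ifs with h h h h <;> first | rw [h] | rfl

lemma top2_id (x : List ℤ) : top2 x (ent x x.length) (ent x (x.length - 1)) = x := by
  conv_rhs => rw [← build_ent x]
  unfold top2
  apply build_congr
  intro k h1 h2
  split_ifs with h h <;> first | rw [h] | rfl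

lemma top3_id (x : List ℤ) :
    top3 x (ent x x.length) (ent x (x.length-1)) (ent x (x.length-2)) = x := by
  conv_rhs => rw [← build_ent x]
  unfold top3
  apply build_congr
  intro k h1 h2
  split_ifs with h h h <;> first | rw [h] | rfl

noncomputable def WI (I : Finset ℕ) : Submodule ℚ FreeV :=
  Submodule.span ℚ {v : FreeV | ∃ y, IsBSnake I y ∧ v = sv y} ⊔ Mrel I

lemma snake_mem_WI (I : Finset ℕ) (x : List ℤ) (h : IsBSnake I x) : sv x ∈ WI I := by
  apply Submodule.mem_sup_left
  exact Submodule.subset_span ⟨x, h, rfl⟩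

lemma mrel_le_WI (I : Finset ℕ) : Mrel I ≤ WI I := le_sup_right


lemma case_H1 (I : Finset ℕ) (x : List ℤ) (hx : IsSignedPerm I x) (i : ℕ)
    (hi1 : 1 ≤ i) (hi2 : i ≤ x.length/2) (hdef : Dpred x i)
    (IH : ∀ y, IsSignedPerm I y → mu I y < mu I x → sv y ∈ WI I) :
    sv x ∈ WI I := by
  set r := x.length with hr
  set y := swapPair x i with hy
  have hylen : y.length = r := length_build _ _
  have hsp := spfun_of I x hx
  have hcard : r = I.card := hx.1
  have hir : 2*i ≤ r := by omega
  have e2i : ent y (2*i) = ent x (2*i-1) := by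
    rw [hy, swapPair, ent_build _ _ _ (by omega) (by omega)]
    rw [if_neg (by omega), if_pos rfl]
  have e2im : ent y (2*i-1) = ent x (2*i) := by
    rw [hy, swapPair, ent_build _ _ _ (by omega) (by omega)]
    rw [if_pos rfl]
  have eoth : ∀ k, k ≠ 2*i → k ≠ 2*i-1 → ent y k = ent x k := by
    intro k hk1 hk2
    by_cases hk : 1 ≤ k ∧ k ≤ r
    · rw [hy, swapPair, ent_build _ _ _ hk.1 hk.2, if_neg hk2, if_neg hk1]
    · rw [ent_out y k (by omega), ent_out x k (by omega)]
  have hyperm : IsSignedPerm I y := by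
    apply isSignedPerm_build
    apply spfun_comp I r (ent x) _
      (fun k => if k = 2*i-1 then 2*i else if k = 2*i then 2*i-1 else k) hsp
    · intro k h1 h2
      refine ⟨by split_ifs <;> omega, by split_ifs <;> omega, ?_⟩
      split_ifs <;> rfl
    · intro j k hj1 hj2 hk1 hk2 heq
      split_ifs at heq <;> omega
  have hmuV : muV y = muV x := by
    apply muV_congr y x (by rw [hylen])
    intro j hj1 hj2
    congr 1
    unfold bs
    rcases eq_or_ne j i with rfl | hne
    · rw [e2i, e2im]; ring
    · rw [eoth (2*j) (by omega) (by omega), eoth (2*j-1) (by omega) (by omega)]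
  have hdvals : (r % 2 = 1 → ent x (2*i-1) < ent x (2*i)) ∧
      (r % 2 = 0 → ent x (2*i) < ent x (2*i-1)) := by
    unfold Dpred at hdef
    rw [← hr] at hdef
    constructor <;> intro hp <;> [rw [if_pos hp] at hdef; rw [if_neg (by omega)] at hdef] <;>
      exact hdef
  have hndy : ¬ Dpred y i := by
    unfold Dpred
    rw [hylen, e2i, e2im]
    rcases Nat.mod_two_eq_zero_or_one r with hp | hp
    · rw [if_neg (show ¬(r % 2 = 1) by omega)]
      have := hdvals.2 hp
      omega
    · rw [if_pos hp]
      have := hdvals.1 hp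
      omega
  have hlt : mu I y < mu I x := by
    by_cases him : i = r/2
    · -- top block : T decreases, D unchanged
      have hDm : Dm y = Dm x := by
        apply Dm_congr y x (by rw [hylen])
        intro k h1 h2
        rw [← hr] at h2
        exact eoth k (by omega) (by omega)
      have hTm : Tm y < Tm x := by
        unfold Tm
        rw [hylen, ← hr]
        rcases Nat.mod_two_eq_zero_or_one r with hp | hp
        · have hri : 2*i = r := by omega
          have hri1 : 2*i-1 = r-1 := by omega
          have ey0 : ent y r = ent x (r-1) := by rw [← hri]; exact e2i
          have ey1 : ent y (r-1) = ent x r := by rw [← hri]; exact e2im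
          have hd := hdvals.2 hp
          rw [hri] at hd
          rw [if_neg (show ¬(r % 2 = 1) by omega), if_neg (show ¬(r % 2 = 1) by omega),
            ey0, ey1]
          split_ifs <;> omega
        · have hri : 2*i = r-1 := by omega
          have hri1 : 2*i-1 = r-2 := by omega
          have ey0 : ent y r = ent x r := eoth r (by omega) (by omega)
          have ey1 : ent y (r-1) = ent x (r-2) := by rw [← hri, ← hri1]; exact e2i
          have ey2 : ent y (r-2) = ent x (r-1) := by rw [← hri, ← hri1]; exact e2im
          have hd := hdvals.1 hp
          rw [hri1, hri] at hd
          rw [if_pos hp, if_pos hp, ey0, ey1, ey2]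
          split_ifs <;> omega
      exact mu_lt_of_T_lt I y x (by rw [hylen]) hmuV hTm (le_of_eq hDm)
    · -- inner block : D decreases
      have hTm : Tm y = Tm x := by
        have o1 : ent y r = ent x r := eoth r (by omega) (by omega)
        have o2 : ent y (r-1) = ent x (r-1) := by apply eoth <;> omega
        unfold Tm
        rw [hylen, ← hr]
        rcases Nat.mod_two_eq_zero_or_one r with hp | hp
        · rw [if_neg (show ¬(r % 2 = 1) by omega), if_neg (show ¬(r % 2 = 1) by omega), o1, o2]
        · have o3 : ent y (r-2) = ent x (r-2) := by apply eoth <;> omega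
          rw [if_pos hp, if_pos hp, o1, o2, o3]
      have hDm : Dm y < Dm x := by
        apply Dm_lt y x i (by rw [hylen]) hi1 (by rw [← hr]; omega) _ hdef hndy
        intro k h1 h2 h3 h4
        exact eoth k (by omega) (by omega)
      exact mu_lt_of_D_lt I y x (by rw [hylen]) hmuV hTm hDm
  have hrel : H1 x i ∈ Mrel I := H1_mem I x i hx hi1 (by rw [← hcard]; exact hi2)
  have hxeq : sv x = H1 x i - sv y := by
    have h1 : H1 x i = sv x + sv y := rfl
    rw [h1]; abel
  rw [hxeq]
  exact Submodule.sub_mem _ (mrel_le_WI I hrel) (IH y hyperm hlt)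


lemma ent_top2_r (x : List ℤ) (a b : ℤ) (hr : 1 ≤ x.length) :
    ent (top2 x a b) x.length = a := by
  unfold top2
  rw [ent_build _ _ _ hr le_rfl, if_pos rfl]

lemma ent_top2_r1 (x : List ℤ) (a b : ℤ) (hr : 2 ≤ x.length) :
    ent (top2 x a b) (x.length - 1) = b := by
  unfold top2
  rw [ent_build _ _ _ (by omega) (by omega), if_neg (by omega), if_pos rfl]

lemma ent_top2_other (x : List ℤ) (a b : ℤ) (k : ℕ) (h1 : k ≠ x.length)
    (h2 : k ≠ x.length - 1) : ent (top2 x a b) k = ent x k := by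
  by_cases hk : 1 ≤ k ∧ k ≤ x.length
  · unfold top2
    rw [ent_build _ _ _ hk.1 hk.2, if_neg h1, if_neg h2]
  · rw [ent_out _ k (by unfold top2; rw [length_build]; omega), ent_out x k (by omega)]

lemma ent_top3_r (x : List ℤ) (a b c : ℤ) (hr : 1 ≤ x.length) :
    ent (top3 x a b c) x.length = a := by
  unfold top3
  rw [ent_build _ _ _ hr le_rfl, if_pos rfl]

lemma ent_top3_r1 (x : List ℤ) (a b c : ℤ) (hr : 2 ≤ x.length) :
    ent (top3 x a b c) (x.length - 1) = b := by
  unfold top3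
  rw [ent_build _ _ _ (by omega) (by omega), if_neg (by omega), if_pos rfl]

lemma ent_top3_r2 (x : List ℤ) (a b c : ℤ) (hr : 3 ≤ x.length) :
    ent (top3 x a b c) (x.length - 2) = c := by
  unfold top3
  rw [ent_build _ _ _ (by omega) (by omega), if_neg (by omega), if_neg (by omega), if_pos rfl]

lemma ent_top3_other (x : List ℤ) (a b c : ℤ) (k : ℕ) (h1 : k ≠ x.length)
    (h2 : k ≠ x.length - 1) (h3 : k ≠ x.length - 2) : ent (top3 x a b c) k = ent x k := by
  by_cases hk : 1 ≤ k ∧ k ≤ x.length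
  · unfold top3
    rw [ent_build _ _ _ hk.1 hk.2, if_neg h1, if_neg h2, if_neg h3]
  · rw [ent_out _ k (by unfold top3; rw [length_build]; omega), ent_out x k (by omega)]

lemma case_H3 (I : Finset ℕ) (x : List ℤ) (hx : IsSignedPerm I x)
    (hpar : x.length % 2 = 1) (hneg : ent x x.length < 0)
    (IH : ∀ y, IsSignedPerm I y → mu I y < mu I x → sv y ∈ WI I) :
    sv x ∈ WI I := by
  set r := x.length with hr
  have hr1 : 1 ≤ r := by omega
  set y := build x.length (fun k => if k = x.length then -ent x k else ent x k) with hy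
  have hylen : y.length = r := length_build _ _
  have hsp := spfun_of I x hx
  have hcard : r = I.card := hx.1
  have eyr : ent y r = -ent x r := by
    rw [hy, ent_build _ _ _ hr1 le_rfl, if_pos rfl]
  have eoth : ∀ k, k ≠ r → ent y k = ent x k := by
    intro k hk1
    by_cases hk : 1 ≤ k ∧ k ≤ r
    · rw [hy, ent_build _ _ _ hk.1 hk.2, if_neg hk1]
    · rw [ent_out y k (by omega), ent_out x k (by omega)]
  have hyperm : IsSignedPerm I y := by
    apply isSignedPerm_build
    apply spfun_comp I r (ent x) _ (fun k => k) hsp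
    · intro k h1 h2
      refine ⟨h1, h2, ?_⟩
      split_ifs <;> simp [Int.natAbs_neg]
    · intro j k _ _ _ _ h
      exact h
  have hmuV : muV y = muV x := by
    apply muV_congr y x (by rw [hylen])
    intro j hj1 hj2
    rw [← hr] at hj2
    congr 1
    unfold bs
    rw [eoth (2*j) (by omega), eoth (2*j-1) (by omega)]
  have hDm : Dm y = Dm x := by
    apply Dm_congr y x (by rw [hylen])
    intro k h1 h2
    rw [← hr] at h2
    exact eoth k (by omega)
  have hTm : Tm y < Tm x := by
    have o1 : ent y (r-1) = ent x (r-1) := eoth _ (by omega)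
    have o2 : ent y (r-2) = ent x (r-2) := eoth _ (by omega)
    unfold Tm
    rw [hylen, ← hr, if_pos hpar, if_pos hpar, eyr, o1, o2]
    split_ifs <;> omega
  have hlt : mu I y < mu I x := mu_lt_of_T_lt I y x (by rw [hylen]) hmuV hTm (le_of_eq hDm)
  have hrel : H3 x ∈ Mrel I := H3_mem I x hx (by rw [← hcard]; exact hpar)
  have hxeq : sv x = H3 x - sv y := by
    have h1 : H3 x = sv x + sv y := rfl
    rw [h1]; abel
  rw [hxeq]
  exact Submodule.sub_mem _ (mrel_le_WI I hrel) (IH y hyperm hlt)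


lemma spfun_top2' (I : Finset ℕ) (x : List ℤ) (hsp : SPfun I x.length (ent x))
    (c d : ℤ) (σr σr1 : ℕ)
    (hperm : (σr = x.length ∧ σr1 = x.length - 1) ∨ (σr = x.length - 1 ∧ σr1 = x.length))
    (hr : 2 ≤ x.length)
    (hc : c.natAbs = (ent x σr).natAbs) (hd : d.natAbs = (ent x σr1).natAbs) :
    IsSignedPerm I (top2 x c d) := by
  apply isSignedPerm_build
  apply spfun_comp I x.length (ent x) _
    (fun k => if k = x.length then σr else if k = x.length - 1 then σr1 else k) hsp
  · intro k h1 h2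
    refine ⟨by split_ifs <;> omega, by split_ifs <;> omega, ?_⟩
    split_ifs with h h
    exacts [hc, hd, rfl]
  · intro j k hj1 hj2 hk1 hk2 heq
    split_ifs at heq <;> omega

lemma swapPair_top2 (x : List ℤ) (a b : ℤ) (hr : 2 ≤ x.length) (hpar : x.length % 2 = 0) :
    swapPair (top2 x a b) (x.length/2) = top2 x b a := by
  have hlen : (top2 x a b).length = x.length := length_build _ _
  unfold swapPair
  rw [hlen]
  have hrhs : top2 x b a = build x.length
      (fun k => if k = x.length then b else if k = x.length - 1 then a else ent x k) := rfl
  rw [hrhs]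
  apply build_congr
  intro k h1 h2
  have e1 : 2*(x.length/2) = x.length := by omega
  rw [e1]
  rcases eq_or_ne k x.length with rfl | hk1
  · rw [if_neg (by omega), if_pos rfl, if_pos rfl, ent_top2_r1 _ _ _ hr]
  · rcases eq_or_ne k (x.length - 1) with rfl | hk2
    · rw [if_pos rfl, if_neg (by omega), if_pos rfl, ent_top2_r _ _ _ (by omega)]
    · rw [if_neg hk2, if_neg hk1, if_neg hk1, if_neg hk2, ent_top2_other _ _ _ _ hk1 hk2]

lemma case_H4 (I : Finset ℕ) (x : List ℤ) (hx : IsSignedPerm I x)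
    (hpar : x.length % 2 = 0) (hneg : ent x x.length < 0)
    (hQP : ent x (x.length - 1) < ent x x.length)
    (IH : ∀ y, IsSignedPerm I y → mu I y < mu I x → sv y ∈ WI I) :
    sv x ∈ WI I := by
  set r := x.length with hr
  have hrpos : 1 ≤ r := by
    by_contra h
    rw [ent_out x r (by omega)] at hneg
    omega
  have hr2 : 2 ≤ r := by omega
  have hsp := spfun_of I x hx
  have hcard : r = I.card := hx.1
  set t2 := top2 x (ent x r) (-ent x (r-1)) with ht2
  set t3 := top2 x (ent x (r-1)) (-ent x r) with ht3
  set t4 := top2 x (-ent x (r-1)) (-ent x r) with ht4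
  set t2' := top2 x (-ent x (r-1)) (ent x r) with ht2'
  set t3' := top2 x (-ent x r) (ent x (r-1)) with ht3'
  have habs : ∀ z : ℤ, (-z).natAbs = z.natAbs := fun z => Int.natAbs_neg z
  have hperm2 : IsSignedPerm I t2 :=
    spfun_top2' I x hsp _ _ r (r-1) (Or.inl ⟨rfl, rfl⟩) hr2 rfl (habs _)
  have hperm3 : IsSignedPerm I t3 :=
    spfun_top2' I x hsp _ _ (r-1) r (Or.inr ⟨rfl, rfl⟩) hr2 rfl (habs _)
  have hperm4 : IsSignedPerm I t4 :=
    spfun_top2' I x hsp _ _ (r-1) r (Or.inr ⟨rfl, rfl⟩) hr2 (habs _) (habs _)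
  have hperm2' : IsSignedPerm I t2' :=
    spfun_top2' I x hsp _ _ (r-1) r (Or.inr ⟨rfl, rfl⟩) hr2 (habs _) rfl
  have hperm3' : IsSignedPerm I t3' :=
    spfun_top2' I x hsp _ _ r (r-1) (Or.inl ⟨rfl, rfl⟩) hr2 (habs _) rfl
  -- measure facts for a generic top2 word
  have hmeas : ∀ a b : ℤ, IsSignedPerm I (top2 x a b) → ¬(a < b) →
      ¬(b < a ∧ a < 0) → mu I (top2 x a b) < mu I x := by
    intro a b hline hc1 hc2
    have hlen : (top2 x a b).length = r := length_build _ _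
    have hmuV : muV (top2 x a b) = muV x := by
      apply muV_congr _ x (by rw [hlen])
      intro j hj1 hj2
      rw [← hr] at hj2
      rcases eq_or_ne j (r/2) with rfl | hne
      · rw [← hr, wgt_top]
        ring
      · congr 1
        unfold bs
        rw [ent_top2_other _ _ _ _ (by omega) (by omega),
          ent_top2_other _ _ _ _ (by omega) (by omega)]
    have hDm : Dm (top2 x a b) = Dm x := by
      apply Dm_congr _ x (by rw [hlen])
      intro k h1 h2
      rw [← hr] at h2
      exact ent_top2_other _ _ _ _ (by omega) (by omega)
    have hTm : Tm (top2 x a b) < Tm x := by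
      unfold Tm
      rw [hlen, ← hr, if_neg (show ¬(r % 2 = 1) by omega),
        if_neg (show ¬(r % 2 = 1) by omega)]
      rw [show ent (top2 x a b) r = a from ent_top2_r _ _ _ (by omega),
        show ent (top2 x a b) (r-1) = b from ent_top2_r1 _ _ _ (by omega)]
      split_ifs <;> omega
    exact mu_lt_of_T_lt I _ x (by rw [hlen]) hmuV hTm (le_of_eq hDm)
  have hw2' : sv t2' ∈ WI I := by
    apply IH _ hperm2'
    apply hmeas _ _ hperm2' (by omega) (by omega)
  have hw3' : sv t3' ∈ WI I := by
    apply IH _ hperm3'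
    apply hmeas _ _ hperm3' (by omega) (by omega)
  have hw4 : sv t4 ∈ WI I := by
    apply IH _ hperm4
    apply hmeas _ _ hperm4 (by omega) (by omega)
  have hm2 : H4 x ∈ Mrel I := H4_mem I x hx (by rw [← hcard]; exact hpar)
  have hm21 : H1 t2 (r/2) ∈ Mrel I :=
    H1_mem I t2 (r/2) hperm2 (by omega) (by rw [← hcard])
  have hm31 : H1 t3 (r/2) ∈ Mrel I :=
    H1_mem I t3 (r/2) hperm3 (by omega) (by rw [← hcard])
  have hH4 : H4 x = sv x - sv t2 + sv t3 - sv t4 := by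
    unfold H4
    rw [top2_id]
  have hH1t2 : H1 t2 (r/2) = sv t2 + sv t2' := by
    unfold H1
    rw [ht2, hr, swapPair_top2 x _ _ hr2 hpar, ← hr, ← ht2']
  have hH1t3 : H1 t3 (r/2) = sv t3 + sv t3' := by
    unfold H1
    rw [ht3, hr, swapPair_top2 x _ _ hr2 hpar, ← hr, ← ht3']
  have hxeq : sv x = (H4 x + H1 t2 (r/2) - H1 t3 (r/2)) + (- sv t2' + sv t3' + sv t4) := by
    rw [hH4, hH1t2, hH1t3]
    abel
  rw [hxeq]
  apply Submodule.add_mem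
  · apply mrel_le_WI
    exact Submodule.sub_mem _ (Submodule.add_mem _ hm2 hm21) hm31
  · exact Submodule.add_mem _ (Submodule.add_mem _ (Submodule.neg_mem _ hw2') hw3') hw4


set_option maxHeartbeats 1000000 in
lemma spfun_top3' (I : Finset ℕ) (x : List ℤ) (hsp : SPfun I x.length (ent x))
    (a b c : ℤ) (σr σr1 σr2 : ℕ)
    (hset : (σr = x.length ∨ σr = x.length - 1 ∨ σr = x.length - 2) ∧
      (σr1 = x.length ∨ σr1 = x.length - 1 ∨ σr1 = x.length - 2) ∧
      (σr2 = x.length ∨ σr2 = x.length - 1 ∨ σr2 = x.length - 2) ∧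
      σr ≠ σr1 ∧ σr ≠ σr2 ∧ σr1 ≠ σr2)
    (hr : 3 ≤ x.length)
    (ha : a.natAbs = (ent x σr).natAbs) (hb : b.natAbs = (ent x σr1).natAbs)
    (hc : c.natAbs = (ent x σr2).natAbs) :
    IsSignedPerm I (top3 x a b c) := by
  obtain ⟨hs1, hs2, hs3, hd1, hd2, hd3⟩ := hset
  apply isSignedPerm_build
  apply spfun_comp I x.length (ent x) _
    (fun k => if k = x.length then σr else if k = x.length - 1 then σr1
      else if k = x.length - 2 then σr2 else k) hsp
  · intro k h1 h2
    refine ⟨?_, ?_, ?_⟩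
    · split_ifs <;> omega
    · split_ifs <;> omega
    · split_ifs with h h h
      exacts [ha, hb, hc, rfl]
  · intro j k hj1 hj2 hk1 hk2 heq
    split_ifs at heq <;> omega

set_option maxHeartbeats 2000000 in
lemma case_H5 (I : Finset ℕ) (x : List ℤ) (hx : IsSignedPerm I x)
    (hpar : x.length % 2 = 1) (hA : 0 < ent x x.length)
    (hAB : ent x x.length < ent x (x.length - 1))
    (hBC : ent x (x.length - 1) < ent x (x.length - 2))
    (IH : ∀ y, IsSignedPerm I y → mu I y < mu I x → sv y ∈ WI I) :
    sv x ∈ WI I := by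
  set r := x.length with hr
  have hr2 : 2 ≤ r := by
    by_contra h
    rw [ent_out x (r-1) (by omega)] at hAB
    omega
  have hr3 : 3 ≤ r := by omega
  have hsp := spfun_of I x hx
  have hcard : r = I.card := hx.1
  -- measure lemma for generic top3 word
  have hmeas : ∀ a b c : ℤ, IsSignedPerm I (top3 x a b c) → ¬(c < b) → ¬(a < 0) →
      ¬(0 < a ∧ b < c ∧ a < b) → mu I (top3 x a b c) < mu I x := by
    intro a b c hline hc1 hc2 hc3
    have hlen : (top3 x a b c).length = r := length_build _ _
    have hmuV : muV (top3 x a b c) = muV x := by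
      apply muV_congr _ x (by rw [hlen])
      intro j hj1 hj2
      rw [← hr] at hj2
      rcases eq_or_ne j (r/2) with rfl | hne
      · rw [← hr, wgt_top]
        ring
      · congr 1
        unfold bs
        rw [ent_top3_other _ _ _ _ _ (by omega) (by omega) (by omega),
          ent_top3_other _ _ _ _ _ (by omega) (by omega) (by omega)]
    have hDm : Dm (top3 x a b c) = Dm x := by
      apply Dm_congr _ x (by rw [hlen])
      intro k h1 h2
      rw [← hr] at h2
      exact ent_top3_other _ _ _ _ _ (by omega) (by omega) (by omega)
    have hTm : Tm (top3 x a b c) < Tm x := by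
      unfold Tm
      rw [hlen, ← hr, if_pos hpar, if_pos hpar]
      rw [show ent (top3 x a b c) r = a from ent_top3_r _ _ _ _ (by omega),
        show ent (top3 x a b c) (r-1) = b from ent_top3_r1 _ _ _ _ (by omega),
        show ent (top3 x a b c) (r-2) = c from ent_top3_r2 _ _ _ _ (by omega)]
      split_ifs <;> omega
    exact mu_lt_of_T_lt I _ x (by rw [hlen]) hmuV hTm (le_of_eq hDm)
  set A := ent x r with hAd
  set B := ent x (r-1) with hBd
  set C := ent x (r-2) with hCd
  have habs : ∀ z : ℤ, (-z).natAbs = z.natAbs := fun z => Int.natAbs_neg z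
  have hIH : ∀ a b c : ℤ, IsSignedPerm I (top3 x a b c) → ¬(c < b) → ¬(a < 0) →
      ¬(0 < a ∧ b < c ∧ a < b) → sv (top3 x a b c) ∈ WI I := by
    intro a b c h1 h2 h3 h4
    exact IH _ h1 (hmeas a b c h1 h2 h3 h4)
  have s0 : (σr σr1 σr2 : ℕ) → σr = r → σr1 = r - 1 → σr2 = r - 2 → True := fun _ _ _ _ _ _ => trivial
  have w2 : sv (top3 x A (-B) C) ∈ WI I := by
    refine hIH _ _ _ (spfun_top3' I x hsp _ _ _ r (r-1) (r-2)
      ⟨Or.inl rfl, Or.inr (Or.inl rfl), Or.inr (Or.inr rfl), by omega, by omega, by omega⟩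
      hr3 rfl (habs _) rfl) (by omega) (by omega) (by omega)
  have w3 : sv (top3 x A (-C) B) ∈ WI I := by
    refine hIH _ _ _ (spfun_top3' I x hsp _ _ _ r (r-2) (r-1)
      ⟨Or.inl rfl, Or.inr (Or.inr rfl), Or.inr (Or.inl rfl), by omega, by omega, by omega⟩
      hr3 rfl (habs _) rfl) (by omega) (by omega) (by omega)
  have w4 : sv (top3 x A (-C) (-B)) ∈ WI I := by
    refine hIH _ _ _ (spfun_top3' I x hsp _ _ _ r (r-2) (r-1)
      ⟨Or.inl rfl, Or.inr (Or.inr rfl), Or.inr (Or.inl rfl), by omega, by omega, by omega⟩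
      hr3 rfl (habs _) (habs _)) (by omega) (by omega) (by omega)
  have w5 : sv (top3 x B A C) ∈ WI I := by
    refine hIH _ _ _ (spfun_top3' I x hsp _ _ _ (r-1) r (r-2)
      ⟨Or.inr (Or.inl rfl), Or.inl rfl, Or.inr (Or.inr rfl), by omega, by omega, by omega⟩
      hr3 rfl rfl rfl) (by omega) (by omega) (by omega)
  have w6 : sv (top3 x B (-A) C) ∈ WI I := by
    refine hIH _ _ _ (spfun_top3' I x hsp _ _ _ (r-1) r (r-2)
      ⟨Or.inr (Or.inl rfl), Or.inl rfl, Or.inr (Or.inr rfl), by omega, by omega, by omega⟩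
      hr3 rfl (habs _) rfl) (by omega) (by omega) (by omega)
  have w7 : sv (top3 x B (-C) A) ∈ WI I := by
    refine hIH _ _ _ (spfun_top3' I x hsp _ _ _ (r-1) (r-2) r
      ⟨Or.inr (Or.inl rfl), Or.inr (Or.inr rfl), Or.inl rfl, by omega, by omega, by omega⟩
      hr3 rfl (habs _) rfl) (by omega) (by omega) (by omega)
  have w8 : sv (top3 x B (-C) (-A)) ∈ WI I := by
    refine hIH _ _ _ (spfun_top3' I x hsp _ _ _ (r-1) (r-2) r
      ⟨Or.inr (Or.inl rfl), Or.inr (Or.inr rfl), Or.inl rfl, by omega, by omega, by omega⟩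
      hr3 rfl (habs _) (habs _)) (by omega) (by omega) (by omega)
  have w9 : sv (top3 x C A B) ∈ WI I := by
    refine hIH _ _ _ (spfun_top3' I x hsp _ _ _ (r-2) r (r-1)
      ⟨Or.inr (Or.inr rfl), Or.inl rfl, Or.inr (Or.inl rfl), by omega, by omega, by omega⟩
      hr3 rfl rfl rfl) (by omega) (by omega) (by omega)
  have w10 : sv (top3 x C (-A) B) ∈ WI I := by
    refine hIH _ _ _ (spfun_top3' I x hsp _ _ _ (r-2) r (r-1)
      ⟨Or.inr (Or.inr rfl), Or.inl rfl, Or.inr (Or.inl rfl), by omega, by omega, by omega⟩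
      hr3 rfl (habs _) rfl) (by omega) (by omega) (by omega)
  have w11 : sv (top3 x C (-B) A) ∈ WI I := by
    refine hIH _ _ _ (spfun_top3' I x hsp _ _ _ (r-2) (r-1) r
      ⟨Or.inr (Or.inr rfl), Or.inr (Or.inl rfl), Or.inl rfl, by omega, by omega, by omega⟩
      hr3 rfl (habs _) rfl) (by omega) (by omega) (by omega)
  have w12 : sv (top3 x C (-B) (-A)) ∈ WI I := by
    refine hIH _ _ _ (spfun_top3' I x hsp _ _ _ (r-2) (r-1) r
      ⟨Or.inr (Or.inr rfl), Or.inr (Or.inl rfl), Or.inl rfl, by omega, by omega, by omega⟩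
      hr3 rfl (habs _) (habs _)) (by omega) (by omega) (by omega)
  have hm5 : H5 x ∈ Mrel I :=
    H5_mem I x hx (by rw [← hcard]; exact hpar) (by rw [← hcard]; exact hr3)
  have hH5 : H5 x = sv x - sv (top3 x A (-B) C) + sv (top3 x A (-C) B)
      - sv (top3 x A (-C) (-B)) - sv (top3 x B A C) + sv (top3 x B (-A) C)
      - sv (top3 x B (-C) A) + sv (top3 x B (-C) (-A)) + sv (top3 x C A B)
      - sv (top3 x C (-A) B) + sv (top3 x C (-B) A) - sv (top3 x C (-B) (-A)) := by
    unfold H5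
    rw [top3_id]
  have hxeq : sv x = H5 x + sv (top3 x A (-B) C) - sv (top3 x A (-C) B)
      + sv (top3 x A (-C) (-B)) + sv (top3 x B A C) - sv (top3 x B (-A) C)
      + sv (top3 x B (-C) A) - sv (top3 x B (-C) (-A)) - sv (top3 x C A B)
      + sv (top3 x C (-A) B) - sv (top3 x C (-B) A) + sv (top3 x C (-B) (-A)) := by
    rw [hH5]
    abel
  rw [hxeq]
  exact Submodule.add_mem _ (Submodule.sub_mem _ (Submodule.add_mem _ (Submodule.sub_mem _ (Submodule.sub_mem _ (Submodule.add_mem _ (Submodule.sub_mem _ (Submodule.add_mem _ (Submodule.add_mem _ (Submodule.sub_mem _ (Submodule.add_mem _ (mrel_le_WI I hm5) w2) w3) w4) w5) w6) w7) w8) w9) w10) w11) w12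


lemma ent_arr4_1 (x : List ℤ) (i : ℕ) (p q s t : ℤ) (hir : 2*i+2 ≤ x.length) :
    ent (arr4 x i p q s t) (2*i+2) = p := by
  unfold arr4
  rw [ent_build _ _ _ (by omega) (by omega), if_pos rfl]

lemma ent_arr4_2 (x : List ℤ) (i : ℕ) (p q s t : ℤ) (hir : 2*i+2 ≤ x.length) :
    ent (arr4 x i p q s t) (2*i+1) = q := by
  unfold arr4
  rw [ent_build _ _ _ (by omega) (by omega), if_neg (by omega), if_pos rfl]

lemma ent_arr4_3 (x : List ℤ) (i : ℕ) (p q s t : ℤ) (hi : 1 ≤ i) (hir : 2*i+2 ≤ x.length) :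
    ent (arr4 x i p q s t) (2*i) = s := by
  unfold arr4
  rw [ent_build _ _ _ (by omega) (by omega), if_neg (by omega), if_neg (by omega), if_pos rfl]

lemma ent_arr4_4 (x : List ℤ) (i : ℕ) (p q s t : ℤ) (hi : 1 ≤ i) (hir : 2*i+2 ≤ x.length) :
    ent (arr4 x i p q s t) (2*i-1) = t := by
  unfold arr4
  rw [ent_build _ _ _ (by omega) (by omega), if_neg (by omega), if_neg (by omega),
    if_neg (by omega), if_pos rfl]

lemma ent_arr4_other (x : List ℤ) (i : ℕ) (p q s t : ℤ) (k : ℕ) (h1 : k ≠ 2*i+2)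
    (h2 : k ≠ 2*i+1) (h3 : k ≠ 2*i) (h4 : k ≠ 2*i-1) :
    ent (arr4 x i p q s t) k = ent x k := by
  by_cases hk : 1 ≤ k ∧ k ≤ x.length
  · unfold arr4
    rw [ent_build _ _ _ hk.1 hk.2, if_neg h1, if_neg h2, if_neg h3, if_neg h4]
  · rw [ent_out _ k (by unfold arr4; rw [length_build]; omega), ent_out x k (by omega)]

set_option maxHeartbeats 1000000 in
lemma spfun_arr4' (I : Finset ℕ) (x : List ℤ) (hsp : SPfun I x.length (ent x))
    (i : ℕ) (p q s t : ℤ) (π1 π2 π3 π4 : ℕ) (hi : 1 ≤ i) (hir : 2*i+2 ≤ x.length)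
    (hs1 : π1 = 2*i+2 ∨ π1 = 2*i+1 ∨ π1 = 2*i ∨ π1 = 2*i-1)
    (hs2 : π2 = 2*i+2 ∨ π2 = 2*i+1 ∨ π2 = 2*i ∨ π2 = 2*i-1)
    (hs3 : π3 = 2*i+2 ∨ π3 = 2*i+1 ∨ π3 = 2*i ∨ π3 = 2*i-1)
    (hs4 : π4 = 2*i+2 ∨ π4 = 2*i+1 ∨ π4 = 2*i ∨ π4 = 2*i-1)
    (hd1 : π1 ≠ π2) (hd2 : π1 ≠ π3) (hd3 : π1 ≠ π4) (hd4 : π2 ≠ π3) (hd5 : π2 ≠ π4)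
    (hd6 : π3 ≠ π4)
    (hp : p = ent x π1) (hq : q = ent x π2) (hss : s = ent x π3) (ht : t = ent x π4) :
    IsSignedPerm I (arr4 x i p q s t) := by
  apply isSignedPerm_build
  apply spfun_comp I x.length (ent x) _
    (fun k => if k = 2*i+2 then π1 else if k = 2*i+1 then π2
      else if k = 2*i then π3 else if k = 2*i-1 then π4 else k) hsp
  · intro k h1 h2
    refine ⟨?_, ?_, ?_⟩
    · split_ifs <;> omega
    · split_ifs <;> omega
    · split_ifs with h h h h
      · rw [hp]
      · rw [hq]
      · rw [hss]
      · rw [ht]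
      · rfl
  · intro j k hj1 hj2 hk1 hk2 heq
    split_ifs at heq <;> omega

set_option maxHeartbeats 2000000 in
lemma case_H2 (I : Finset ℕ) (x : List ℤ) (hx : IsSignedPerm I x) (i : ℕ)
    (hi1 : 1 ≤ i) (hi2 : i + 1 ≤ x.length/2)
    (hndi : ¬ Dpred x i) (hndi1 : ¬ Dpred x (i+1))
    (hbd : if x.length % 2 = 1 then ent x (2*i+1) < ent x (2*i)
      else ent x (2*i) < ent x (2*i+1))
    (IH : ∀ y, IsSignedPerm I y → mu I y < mu I x → sv y ∈ WI I) :
    sv x ∈ WI I := by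
  set r := x.length with hr
  have hir : 2*i+2 ≤ r := by omega
  have hsp := spfun_of I x hx
  have hcard : r = I.card := hx.1
  have hne : ∀ j k, 1 ≤ j → j ≤ r → 1 ≤ k → k ≤ r → j ≠ k → ent x j ≠ ent x k := by
    intro j k h1 h2 h3 h4 h5 heq
    exact h5 (hsp.2.2 j k h1 h2 h3 h4 (by rw [heq]))
  set a := ent x (2*i+2) with ha
  set b := ent x (2*i+1) with hb
  set c := ent x (2*i) with hc
  set d := ent x (2*i-1) with hd
  have hab : a ≠ b := hne _ _ (by omega) (by omega) (by omega) (by omega) (by omega)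
  have hcd : c ≠ d := hne _ _ (by omega) (by omega) (by omega) (by omega) (by omega)
  have horder : (r % 2 = 1 → a < b ∧ b < c ∧ c < d) ∧
      (r % 2 = 0 → d < c ∧ c < b ∧ b < a) := by
    unfold Dpred at hndi hndi1
    constructor <;> intro hp
    · rw [if_pos hp] at hndi hndi1 hbd
      have e1 : 2*(i+1) = 2*i+2 := by ring
      have e2 : 2*(i+1)-1 = 2*i+1 := by omega
      rw [e2, e1] at hndi1
      refine ⟨by omega, hbd, by omega⟩
    · rw [if_neg (by omega)] at hndi hndi1 hbd
      have e1 : 2*(i+1) = 2*i+2 := by ring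
      have e2 : 2*(i+1)-1 = 2*i+1 := by omega
      rw [e2, e1] at hndi1
      refine ⟨by omega, hbd, by omega⟩
  -- generic handling of the five other terms
  have hterm : ∀ p q s t : ℤ, IsSignedPerm I (arr4 x i p q s t) →
      p + q + s + t = a + b + c + d →
      (r % 2 = 1 → s + t < c + d) → (r % 2 = 0 → c + d < s + t) →
      sv (arr4 x i p q s t) ∈ WI I := by
    intro p q s t hline hsum hlt1 hlt2
    set y := arr4 x i p q s t with hy
    have hylen : y.length = r := length_build _ _
    apply IH y hline
    apply mu_lt_of_muV_lt I y x hline hx (by rw [hylen])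
    have hdiff : muV y - muV x =
        (wgt r i - wgt r (i+1)) * (bs y i - bs x i) := by
      apply muV_sub y x i (by rw [hylen]) hi1 (by rw [← hr]; exact hi2)
      · intro j hj1 hj2 hj3 hj4
        unfold bs
        rw [hy, ent_arr4_other _ _ _ _ _ _ _ (by omega) (by omega) (by omega) (by omega),
          ent_arr4_other _ _ _ _ _ _ _ (by omega) (by omega) (by omega) (by omega)]
      · unfold bs
        have f1 : ent y (2*(i+1)) = p := by
          rw [hy, show 2*(i+1) = 2*i+2 by ring]
          exact ent_arr4_1 x i p q s t hir
        have f2 : ent y (2*(i+1)-1) = q := by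
          rw [hy, show 2*(i+1)-1 = 2*i+1 by omega]
          exact ent_arr4_2 x i p q s t hir
        have f3 : ent y (2*i) = s := by
          rw [hy]; exact ent_arr4_3 x i p q s t hi1 hir
        have f4 : ent y (2*i-1) = t := by
          rw [hy]; exact ent_arr4_4 x i p q s t hi1 hir
        rw [f1, f2, f3, f4, show 2*(i+1)-1 = 2*i+1 by omega, show 2*(i+1) = 2*i+2 by ring,
          ← ha, ← hb, ← hc, ← hd]
        omega
    have hbsy : bs y i = s + t := by
      unfold bs
      rw [hy, ent_arr4_3 x i p q s t hi1 hir, ent_arr4_4 x i p q s t hi1 hir]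
    have hbsx : bs x i = c + d := by
      unfold bs
      rw [← hc, ← hd]
    have hw := wgt_sub r i
    rw [hbsy, hbsx] at hdiff
    rcases Nat.mod_two_eq_zero_or_one r with hp | hp
    · rw [if_neg (show ¬(r % 2 = 1) by omega)] at hw
      have := hlt2 hp
      nlinarith [hdiff, hw]
    · rw [if_pos hp] at hw
      have := hlt1 hp
      nlinarith [hdiff, hw]
  have w2 : sv (arr4 x i a c b d) ∈ WI I := by
    apply hterm _ _ _ _ (spfun_arr4' I x hsp i _ _ _ _ (2*i+2) (2*i) (2*i+1) (2*i-1)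
      hi1 hir (by omega) (by omega) (by omega) (by omega) (by omega) (by omega) (by omega)
      (by omega) (by omega) (by omega) ha hc hb hd) (by ring)
    · intro hp
      have := horder.1 hp
      omega
    · intro hp
      have := horder.2 hp
      omega
  have w3 : sv (arr4 x i b c a d) ∈ WI I := by
    apply hterm _ _ _ _ (spfun_arr4' I x hsp i _ _ _ _ (2*i+1) (2*i) (2*i+2) (2*i-1)
      hi1 hir (by omega) (by omega) (by omega) (by omega) (by omega) (by omega) (by omega)
      (by omega) (by omega) (by omega) hb hc ha hd) (by ring)
    · intro hp
      have := horder.1 hp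
      omega
    · intro hp
      have := horder.2 hp
      omega
  have w4 : sv (arr4 x i a d b c) ∈ WI I := by
    apply hterm _ _ _ _ (spfun_arr4' I x hsp i _ _ _ _ (2*i+2) (2*i-1) (2*i+1) (2*i)
      hi1 hir (by omega) (by omega) (by omega) (by omega) (by omega) (by omega) (by omega)
      (by omega) (by omega) (by omega) ha hd hb hc) (by ring)
    · intro hp
      have := horder.1 hp
      omega
    · intro hp
      have := horder.2 hp
      omega
  have w5 : sv (arr4 x i b d a c) ∈ WI I := by
    apply hterm _ _ _ _ (spfun_arr4' I x hsp i _ _ _ _ (2*i+1) (2*i-1) (2*i+2) (2*i)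
      hi1 hir (by omega) (by omega) (by omega) (by omega) (by omega) (by omega) (by omega)
      (by omega) (by omega) (by omega) hb hd ha hc) (by ring)
    · intro hp
      have := horder.1 hp
      omega
    · intro hp
      have := horder.2 hp
      omega
  have w6 : sv (arr4 x i c d a b) ∈ WI I := by
    apply hterm _ _ _ _ (spfun_arr4' I x hsp i _ _ _ _ (2*i) (2*i-1) (2*i+2) (2*i+1)
      hi1 hir (by omega) (by omega) (by omega) (by omega) (by omega) (by omega) (by omega)
      (by omega) (by omega) (by omega) hc hd ha hb) (by ring)
    · intro hp
      have := horder.1 hp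
      omega
    · intro hp
      have := horder.2 hp
      omega
  have hm2 : H2 x i ∈ Mrel I := H2_mem I x i hx hi1 (by rw [← hcard]; exact hi2)
  have hH2 : H2 x i = sv x - sv (arr4 x i a c b d) + sv (arr4 x i b c a d)
      + sv (arr4 x i a d b c) - sv (arr4 x i b d a c) + sv (arr4 x i c d a b) := by
    unfold H2
    rw [arr4_id]
  have hxeq : sv x = H2 x i + sv (arr4 x i a c b d) - sv (arr4 x i b c a d)
      - sv (arr4 x i a d b c) + sv (arr4 x i b d a c) - sv (arr4 x i c d a b) := by
    rw [hH2]
    abel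
  rw [hxeq]
  exact Submodule.sub_mem _ (Submodule.add_mem _ (Submodule.sub_mem _ (Submodule.sub_mem _
    (Submodule.add_mem _ (mrel_le_WI I hm2) w2) w3) w4) w5) w6


lemma snake_done (I : Finset ℕ) (x : List ℤ) (hx : IsSignedPerm I x)
    (hnz : ∀ k, 1 ≤ k → k ≤ x.length → ent x k ≠ 0)
    (hne : ∀ j k, 1 ≤ j → j ≤ x.length → 1 ≤ k → k ≤ x.length → j ≠ k → ent x j ≠ ent x k)
    (hD : ∀ j, 1 ≤ j → j ≤ x.length/2 → ¬ Dpred x j)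
    (hB : ∀ i, 1 ≤ i → i + 1 ≤ x.length/2 →
      ¬(if x.length % 2 = 1 then ent x (2*i+1) < ent x (2*i)
        else ent x (2*i) < ent x (2*i+1)))
    (htop : ¬ ent x x.length < 0)
    (htop2 : x.length % 2 = 1 → ¬(ent x x.length < ent x (x.length - 1))) :
    IsBSnake I x := by
  set r := x.length with hr
  refine ⟨hx, ?_, ?_⟩
  · intro h
    show 0 < ent x r
    have := hnz r (by omega) le_rfl
    omega
  · intro k hk1 hk2
    rcases Nat.mod_two_eq_zero_or_one k with hkp | hkp
    · -- k even, boundary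
      set i := k/2 with hi
      have hk2i : k = 2*i := by omega
      have hi1 : 1 ≤ i := by omega
      rcases Nat.mod_two_eq_zero_or_one r with hrp | hrp
      · -- r even : i+1 ≤ r/2
        rw [if_neg (by omega)]
        have hb := hB i hi1 (by omega)
        rw [if_neg (by omega)] at hb
        have hnekk : ent x (2*i) ≠ ent x (2*i+1) :=
          hne _ _ (by omega) (by omega) (by omega) (by omega) (by omega)
        rw [hk2i]
        omega
      · -- r odd
        rw [if_pos (by omega)]
        by_cases hcase : i + 1 ≤ r/2
        · have hb := hB i hi1 hcase
          rw [if_pos hrp] at hb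
          have hnekk : ent x (2*i+1) ≠ ent x (2*i) :=
            hne _ _ (by omega) (by omega) (by omega) (by omega) (by omega)
          rw [hk2i]
          omega
        · -- k = r - 1
          have hkr : k = r - 1 := by omega
          have ht := htop2 hrp
          have hnekk : ent x r ≠ ent x (r-1) :=
            hne _ _ (by omega) (by omega) (by omega) (by omega) (by omega)
          rw [hkr, show r - 1 + 1 = r by omega]
          omega
    · -- k odd, internal
      set j := (k+1)/2 with hj
      have hk2j : k = 2*j - 1 := by omega
      have hj1 : 1 ≤ j := by omega
      have hjm : j ≤ r/2 := by omega
      have hd := hD j hj1 hjm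
      unfold Dpred at hd
      have hnekk : ent x (2*j-1) ≠ ent x (2*j) :=
        hne _ _ (by omega) (by omega) (by omega) (by omega) (by omega)
      rcases Nat.mod_two_eq_zero_or_one r with hrp | hrp
      · rw [if_pos (by omega)]
        rw [← hr, if_neg (by omega)] at hd
        rw [hk2j, show 2*j - 1 + 1 = 2*j by omega]
        omega
      · rw [if_neg (by omega)]
        rw [← hr, if_pos hrp] at hd
        rw [hk2j, show 2*j - 1 + 1 = 2*j by omega]
        omega

theorem key_induction (I : Finset ℕ) (hI : ∀ i ∈ I, 0 < i) :
    ∀ n x, IsSignedPerm I x → mu I x < n → sv x ∈ WI I := by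
  intro n
  induction n with
  | zero => intro x _ h; omega
  | succ n IH =>
    intro x hx hmu
    have IH' : ∀ y, IsSignedPerm I y → mu I y < mu I x → sv y ∈ WI I := by
      intro y hy hlt
      exact IH y hy (by omega)
    set r := x.length with hr
    have hsp := spfun_of I x hx
    have hne : ∀ j k, 1 ≤ j → j ≤ r → 1 ≤ k → k ≤ r → j ≠ k → ent x j ≠ ent x k := by
      intro j k h1 h2 h3 h4 h5 heq
      exact h5 (hsp.2.2 j k h1 h2 h3 h4 (by rw [heq]))
    have hnz : ∀ k, 1 ≤ k → k ≤ r → ent x k ≠ 0 := by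
      intro k h1 h2 h0
      have hmem := hsp.2.1 k h1 h2
      have := hI _ hmem
      rw [h0] at this
      simp at this
    by_cases hD : ∃ j, 1 ≤ j ∧ j ≤ r/2 ∧ Dpred x j
    · obtain ⟨j, h1, h2, h3⟩ := hD
      exact case_H1 I x hx j h1 h2 h3 IH'
    · push_neg at hD
      have hD' : ∀ j, 1 ≤ j → j ≤ r/2 → ¬ Dpred x j := by
        intro j h1 h2 h3
        exact (hD j h1 h2) h3
      by_cases hB : ∃ i, 1 ≤ i ∧ i + 1 ≤ r/2 ∧ (if r % 2 = 1 then
          ent x (2*i+1) < ent x (2*i) else ent x (2*i) < ent x (2*i+1))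
      · obtain ⟨i, h1, h2, h3⟩ := hB
        exact case_H2 I x hx i h1 h2 (hD' i h1 (by omega)) (hD' (i+1) (by omega) h2) h3 IH'
      · push_neg at hB
        rcases Nat.mod_two_eq_zero_or_one r with hp | hp
        · -- r even
          by_cases hneg : ent x r < 0
          · have hr1 : 1 ≤ r := by
              by_contra h
              rw [ent_out x r (by omega)] at hneg
              omega
            have hr2 : 2 ≤ r := by omega
            have hdm := hD' (r/2) (by omega) le_rfl
            unfold Dpred at hdm
            rw [← hr, if_neg (by omega)] at hdm
            have e1 : 2*(r/2) = r := by omega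
            have e2 : 2*(r/2)-1 = r-1 := by omega
            rw [e2, e1] at hdm
            have hnekk : ent x (r-1) ≠ ent x r :=
              hne _ _ (by omega) (by omega) (by omega) (by omega) (by omega)
            exact case_H4 I x hx hp hneg (by show ent x (r-1) < ent x r; omega) IH'
          · apply snake_mem_WI
            apply snake_done I x hx hnz hne hD' hB hneg
            intro hodd
            omega
        · -- r odd
          by_cases hneg : ent x r < 0
          · exact case_H3 I x hx hp hneg IH'
          · by_cases hAB : ent x r < ent x (r-1)
            · have hr2 : 2 ≤ r := by
                by_contra h
                rw [ent_out x (r-1) (by omega)] at hAB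
                omega
              have hr3 : 3 ≤ r := by omega
              have hA : 0 < ent x r := by
                have := hnz r (by omega) le_rfl
                omega
              have hdm := hD' (r/2) (by omega) le_rfl
              unfold Dpred at hdm
              rw [← hr, if_pos hp] at hdm
              have e1 : 2*(r/2) = r-1 := by omega
              have e2 : 2*(r/2)-1 = r-2 := by omega
              rw [e2, e1] at hdm
              have hnekk : ent x (r-2) ≠ ent x (r-1) :=
                hne _ _ (by omega) (by omega) (by omega) (by omega) (by omega)
              exact case_H5 I x hx hp hA hAB (by show ent x (r-1) < ent x (r-2); omega) IH'
            · apply snake_mem_WI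
              exact snake_done I x hx hnz hne hD' hB hneg (fun _ => hAB)

end Stmt10Aux


/-- every signed permutation on `I` is congruent modulo `M_I` to a
`ℚ`-linear combination of `B`-snakes on `I`. -/
theorem stmt10 (I : Finset ℕ) (hI : ∀ i ∈ I, 0 < i) (x : List ℤ)
    (hx : IsSignedPerm I x) :
    ∃ w ∈ Submodule.span ℚ {v : FreeV | ∃ y, IsBSnake I y ∧ v = sv y},
      sv x - w ∈ Mrel I := by
  have hkey := Stmt10Aux.key_induction I hI (Stmt10Aux.mu I x + 1) x hx (by omega)
  rw [Stmt10Aux.WI, Submodule.mem_sup] at hkey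
  obtain ⟨y, hy, z, hz, hyz⟩ := hkey
  refine ⟨y, hy, ?_⟩
  have : sv x - y = z := by
    rw [← hyz]
    abel
  rw [this]
  exact hz
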